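/- arXiv:2505.15568 — 2 statements merged into one kernel-verified Lean document; each statement's English description precedes it below -/
import Mathlib

section
/- Downward time translation of behaviors: let s' be an extended state, x a clock, and n ∈ ℕ with n < s'.x and (n : ℕ ∪ {∞}) < n^x(s'). Then every behavior σ ∈ N_{S'} with σ 0 = s' satisfies 𝒯'^x_{s'.x − n − 1}(σ) ∈ N_{S'}. -/
open scoped Classical

universe u v

/-- A state of an explicit real-time system: a non-clock component and the clock values. -/
structure RTState (α : Type u) (𝒳 : Type v) where
  core : α
  clk : 𝒳 → ℕ

/-- An extended state: an underlying state together with the mapped-clock values. -/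
structure RTEState (α : Type u) (𝒳 : Type v) where
  st : RTState α 𝒳
  m : 𝒳 → ℕ

namespace RT

variable {α : Type u} {𝒳 : Type v}

/-- `T x d s`: the state agreeing with `s` except that clock `x` has value `d`. -/
noncomputable def T (x : 𝒳) (d : ℕ) (s : RTState α 𝒳) : RTState α 𝒳 :=
  ⟨s.core, fun y => if y = x then d else s.clk y⟩

/-- `𝒯^x_d` applied pointwise to a behavior. -/
noncomputable def Tb (x : 𝒳) (d : ℕ) (σ : ℕ → RTState α 𝒳) : ℕ → RTState α 𝒳 :=
  fun i => T x d (σ i)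

/-- `N_S`: behaviors each of whose steps is a `NextI` step or a stuttering step. -/
def NS (NextI : RTState α 𝒳 → RTState α 𝒳 → Prop) : Set (ℕ → RTState α 𝒳) :=
  { σ | ∀ i, NextI (σ i) (σ (i + 1)) ∨ σ (i + 1) = σ i }

/-- `AdvanceTime_S`: all clocks advance by one, provided no time bound is hit. -/
def AdvanceTimeS (B : 𝒳 → RTState α 𝒳 → Set ℕ) (s t : RTState α 𝒳) : Prop :=
  t.core = s.core ∧ (∀ x, t.clk x = s.clk x + 1) ∧ ∀ x, s.clk x ∉ B x s

/-- `ETP^x(s)`: points in time at which a newly possible behavior for state `s` exists. -/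
def ETP (NextI : RTState α 𝒳 → RTState α 𝒳 → Prop) (x : 𝒳) (s : RTState α 𝒳) :
    Set ℕ :=
  { t | 1 ≤ t ∧ ∃ σ ∈ NS NextI, σ 0 = T x t s ∧ Tb x (t - 1) σ ∉ NS NextI }

/-- `AdvanceTime_Ŝ`: the time-optimized advance-time action. -/
def AdvanceTimeHat (B relETP : 𝒳 → RTState α 𝒳 → Set ℕ) (s t : RTState α 𝒳) : Prop :=
  t.core = s.core ∧ (∃ x, s.clk x < t.clk x) ∧
    (∀ x, t.clk x = s.clk x ∨ (s.clk x < t.clk x ∧ t.clk x ∈ relETP x s)) ∧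
    ∀ x, ∀ b ∈ B x s, s.clk x ≤ b → t.clk x ≤ b

/-- `Init'`: initial extended states, with mapped clocks equal to the clocks. -/
def EInit (Init : Set (RTState α 𝒳)) : Set (RTEState α 𝒳) :=
  { s' | s'.st ∈ Init ∧ ∀ x, s'.m x = s'.st.clk x }

/-- `NextI'`: internal step of the extended system, mapped clocks unchanged. -/
def ENextI (NextI : RTState α 𝒳 → RTState α 𝒳 → Prop) (s' t' : RTEState α 𝒳) : Prop :=
  NextI s'.st t'.st ∧ ∀ x, t'.m x = s'.m x

/-- `AdvanceTime'`: extended advance-time step, updating the mapped clocks. -/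
def EAdvanceTime (B relETP : 𝒳 → RTState α 𝒳 → Set ℕ) (s' t' : RTEState α 𝒳) : Prop :=
  AdvanceTimeS B s'.st t'.st ∧
    ∀ x, t'.m x = sSup ({s'.m x} ∪ { n ∈ relETP x s'.st | n ≤ t'.st.clk x })

/-- `T'^x_d`: set clock `x` of the underlying state to `d`; mapped clocks unchanged. -/
noncomputable def ET (x : 𝒳) (d : ℕ) (s' : RTEState α 𝒳) : RTEState α 𝒳 :=
  ⟨T x d s'.st, s'.m⟩

/-- `𝒯'^x_d` applied pointwise to a behavior of extended states. -/
noncomputable def ETb (x : 𝒳) (d : ℕ) (σ : ℕ → RTEState α 𝒳) : ℕ → RTEState α 𝒳 :=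
  fun i => ET x d (σ i)

/-- `N_{S'}`: extended behaviors in which every step is a `NextI'` step or stuttering. -/
def ENS (NextI : RTState α 𝒳 → RTState α 𝒳 → Prop) : Set (ℕ → RTEState α 𝒳) :=
  { σ | ∀ i, ENextI NextI (σ i) (σ (i + 1)) ∨ σ (i + 1) = σ i }

/-- `n^x(s')`, an element of `ℕ∞` (`sInf ∅ = ⊤`), with truncated subtraction on `ℕ`. -/
noncomputable def nfun (NextI : RTState α 𝒳 → RTState α 𝒳 → Prop) (x : 𝒳)
    (s' : RTEState α 𝒳) : ℕ∞ :=
  sInf ((fun n : ℕ => (n : ℕ∞)) ''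
    { n : ℕ | ∃ σ ∈ ENS NextI, σ 0 = ET x (s'.st.clk x - n) s' ∧
        ETb x (s'.st.clk x - n - 1) σ ∉ ENS NextI })

/-- The invariant `Inv`: `s'.x ≤ s'.m^x + n^x(s')` in `ℕ∞` for every clock `x`. -/
def Inv (NextI : RTState α 𝒳 → RTState α 𝒳 → Prop) (s' : RTEState α 𝒳) : Prop :=
  ∀ x, (s'.st.clk x : ℕ∞) ≤ (s'.m x : ℕ∞) + nfun NextI x s'

/-- `bar(s')`: the state with the core of `st s'` and every clock set to its mapped value. -/
def bar (s' : RTEState α 𝒳) : RTState α 𝒳 :=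
  ⟨s'.st.core, s'.m⟩

/-- A step of the extended system: `NextI'`, `AdvanceTime'`, or stuttering. -/
def EStep (NextI : RTState α 𝒳 → RTState α 𝒳 → Prop)
    (B relETP : 𝒳 → RTState α 𝒳 → Set ℕ) (s' t' : RTEState α 𝒳) : Prop :=
  ENextI NextI s' t' ∨ EAdvanceTime B relETP s' t' ∨ t' = s'

/-- An extended state is reachable iff it arises from `Init'` by finitely many steps. -/
def EReachable (Init : Set (RTState α 𝒳)) (NextI : RTState α 𝒳 → RTState α 𝒳 → Prop)
    (B relETP : 𝒳 → RTState α 𝒳 → Set ℕ) (s' : RTEState α 𝒳) : Prop :=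
  ∃ i ∈ EInit Init, Relation.ReflTransGen (EStep NextI B relETP) i s'

/-- Replace the values of the clocks in the set `Y` by their mapped-clock values. -/
noncomputable def replaceClocks (Y : Set 𝒳) (s' : RTEState α 𝒳) : RTEState α 𝒳 :=
  ⟨⟨s'.st.core, fun x => if x ∈ Y then s'.m x else s'.st.clk x⟩, s'.m⟩

end RT

namespace RT

variable {α : Type u} {𝒳 : Type v}

lemma ET_ET (x : 𝒳) (d e : ℕ) (s' : RTEState α 𝒳) : ET x d (ET x e s') = ET x d s' := by
  simp only [ET, T, RTEState.mk.injEq, RTState.mk.injEq, true_and, and_true]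
  funext y
  by_cases h : y = x <;> simp [h]

lemma ETb_ETb (x : 𝒳) (d e : ℕ) (σ : ℕ → RTEState α 𝒳) :
    ETb x d (ETb x e σ) = ETb x d σ := by
  funext i; exact ET_ET ..

lemma clk_const (NextI : RTState α 𝒳 → RTState α 𝒳 → Prop)
    (hClk : ∀ s t, NextI s t → ∀ x, t.clk x = s.clk x)
    (σ : ℕ → RTEState α 𝒳) (hσ : σ ∈ ENS NextI) (i : ℕ) :
    (σ i).st.clk = (σ 0).st.clk := by
  induction i with
  | zero => rfl
  | succ k ih =>
    rcases hσ k with h | h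
    · funext y; rw [hClk _ _ h.1 y]; exact congrFun ih y
    · rw [h]; exact ih

end RT

theorem downward_time_translation {α : Type u} {𝒳 : Type v}
    (NextI : RTState α 𝒳 → RTState α 𝒳 → Prop)
    (hClk : ∀ s t, NextI s t → ∀ x, t.clk x = s.clk x)
    (s' : RTEState α 𝒳) (x : 𝒳) (n : ℕ)
    (h1 : n < s'.st.clk x) (h2 : (n : ℕ∞) < RT.nfun NextI x s') :
    ∀ σ ∈ RT.ENS NextI, σ 0 = s' →
      RT.ETb x (s'.st.clk x - n - 1) σ ∈ RT.ENS NextI := by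
  intro σ hσ hσ0
  have key : ∀ m, m ≤ n + 1 → RT.ETb x (s'.st.clk x - m) σ ∈ RT.ENS NextI := by
    intro m
    induction m with
    | zero =>
      intro _
      have heq : RT.ETb x (s'.st.clk x - 0) σ = σ := by
        funext i
        have hc : (σ i).st.clk x = s'.st.clk x := by
          rw [congrFun (RT.clk_const NextI hClk σ hσ i) x, hσ0]
        show RT.ET x (s'.st.clk x - 0) (σ i) = σ i
        simp only [RT.ET, RT.T, Nat.sub_zero]
        have : (fun y => if y = x then s'.st.clk x else (σ i).st.clk y)
            = (σ i).st.clk := by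
          funext y; by_cases h : y = x <;> simp [h, hc]
        rw [this]
      rw [heq]; exact hσ
    | succ k ih =>
      intro hk
      have ihk := ih (by omega)
      have hnotmem : k ∉ { n : ℕ | ∃ σ ∈ RT.ENS NextI,
          σ 0 = RT.ET x (s'.st.clk x - n) s' ∧
          RT.ETb x (s'.st.clk x - n - 1) σ ∉ RT.ENS NextI } := by
        intro hmem
        have hle : RT.nfun NextI x s' ≤ (k : ℕ∞) := sInf_le ⟨k, hmem, rfl⟩
        have hlt : (k : ℕ∞) < RT.nfun NextI x s' :=
          lt_of_le_of_lt (by exact_mod_cast Nat.le_of_lt_succ hk) h2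
        exact absurd hle (not_le.mpr hlt)
      simp only [Set.mem_setOf_eq, not_exists, not_and, not_not] at hnotmem
      have h0 : (RT.ETb x (s'.st.clk x - k) σ) 0 = RT.ET x (s'.st.clk x - k) s' := by
        show RT.ET x (s'.st.clk x - k) (σ 0) = _
        rw [hσ0]
      have := hnotmem (RT.ETb x (s'.st.clk x - k) σ) ihk h0
      rw [RT.ETb_ETb] at this
      rwa [show s'.st.clk x - (k + 1) = s'.st.clk x - k - 1 by omega]
  have := key (n + 1) le_rfl
  rwa [show s'.st.clk x - (n + 1) = s'.st.clk x - n - 1 by omega] at this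
end

section
/- The invariant Inv is preserved by internal steps: if an extended state s' satisfies Inv(s') and (s', t') is a NextI' step, then t' satisfies Inv(t'). -/
open scoped Classical

universe u v

namespace RTAux
open RT

variable {α : Type u} {𝒳 : Type v}

lemma T_T (x : 𝒳) (d e : ℕ) (s : RTState α 𝒳) : T x d (T x e s) = T x d s := by
  simp only [T]
  congr 1
  funext y
  by_cases hy : y = x <;> simp [hy]

lemma T_self (x : 𝒳) (s : RTState α 𝒳) : T x (s.clk x) s = s := by
  cases s with
  | mk core clk =>
    simp only [T]
    congr 1
    funext y
    by_cases hy : y = x <;> simp [hy]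

lemma ET_ET (x : 𝒳) (e d : ℕ) (u : RTEState α 𝒳) : ET x e (ET x d u) = ET x e u := by
  simp [ET, T_T]

lemma key {NextI : RTState α 𝒳 → RTState α 𝒳 → Prop}
    (hClk : ∀ s t, NextI s t → ∀ x, t.clk x = s.clk x)
    {s' t' : RTEState α 𝒳} (hInv : Inv NextI s')
    (hN : NextI s'.st t'.st) (hm : ∀ y, t'.m y = s'.m y)
    (x : 𝒳) (n : ℕ)
    (hw : ∃ σ ∈ ENS NextI, σ 0 = ET x (s'.st.clk x - n) t' ∧
        ETb x (s'.st.clk x - n - 1) σ ∉ ENS NextI) :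
    s'.st.clk x ≤ s'.m x + n := by
  set c := s'.st.clk x with hcdef
  have hc : t'.st.clk x = c := hClk _ _ hN x
  have conclude : ∀ n' : ℕ, n' ≤ n →
      (∃ σ ∈ ENS NextI, σ 0 = ET x (c - n') s' ∧
        ETb x (c - n' - 1) σ ∉ ENS NextI) →
      c ≤ s'.m x + n := by
    intro n' hn' hmem
    have h1 : nfun NextI x s' ≤ (n' : ℕ∞) := by
      unfold nfun
      exact sInf_le ⟨n', hmem, rfl⟩
    have h2 : (c : ℕ∞) ≤ (s'.m x : ℕ∞) + (n' : ℕ∞) :=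
      le_trans (hInv x) (add_le_add_right h1 _)
    have h3 : c ≤ s'.m x + n' := by exact_mod_cast h2
    omega
  rcases le_or_gt c n with hcn | hcn
  · omega
  set P : ℕ → Prop := fun k =>
    NextI (T x (c - k) s'.st) (T x (c - k) t'.st) ∨
      T x (c - k) s'.st = T x (c - k) t'.st with hPdef
  have hP0 : P 0 := by
    left
    have e1 : T x (c - 0) s'.st = s'.st := by
      rw [Nat.sub_zero, hcdef]; exact T_self x s'.st
    have e2 : T x (c - 0) t'.st = t'.st := by
      rw [Nat.sub_zero, ← hc]; exact T_self x t'.st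
    rw [e1, e2]; exact hN
  obtain ⟨σ, hσ, h0, hfail⟩ := hw
  by_cases hall : ∀ k ≤ n, P k
  · -- prepend ET x (c - n) s' to σ
    refine conclude n le_rfl
      ⟨fun i => Nat.casesOn i (ET x (c - n) s') σ, ?_, rfl, ?_⟩
    · intro i
      cases i with
      | zero =>
        rcases hall n le_rfl with hPn | hPn
        · left
          constructor
          · show NextI (T x (c - n) s'.st) (σ 0).st
            rw [h0]; exact hPn
          · intro y
            show (σ 0).m y = s'.m y
            rw [h0]; exact hm y
        · right
          show σ 0 = ET x (c - n) s'
          rw [h0]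
          simp only [ET, RTEState.mk.injEq]
          exact ⟨hPn.symm, funext hm⟩
      | succ i => exact hσ i
    · intro hmem
      exact hfail (fun i => hmem (i + 1))
  · push_neg at hall
    have h' : ∃ k, k ≤ n ∧ ¬ P k := by
      obtain ⟨k, hk1, hk2⟩ := hall
      exact ⟨k, hk1, hk2⟩
    set k := Nat.find h' with hkdef
    have hkspec : k ≤ n ∧ ¬ P k := by rw [hkdef]; exact Nat.find_spec h'
    have hk1 : 1 ≤ k := by
      rcases Nat.eq_zero_or_pos k with hz | hp
      · exfalso; rw [hz] at hkspec; exact hkspec.2 hP0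
      · exact hp
    have hkn : k ≤ n := hkspec.1
    have hPk1 : P (k - 1) := by
      by_contra hP
      exact Nat.find_min h' (m := k - 1) (by omega) ⟨by omega, hP⟩
    refine conclude (k - 1) (by omega)
      ⟨fun i => Nat.casesOn i (ET x (c - (k - 1)) s') (fun _ => ET x (c - (k - 1)) t'),
        ?_, rfl, ?_⟩
    · intro i
      cases i with
      | zero =>
        rcases hPk1 with hp | hp
        · left
          exact ⟨hp, fun y => hm y⟩
        · right
          show ET x (c - (k - 1)) t' = ET x (c - (k - 1)) s'
          simp only [ET, RTEState.mk.injEq]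
          exact ⟨hp.symm, funext hm⟩
      | succ i => right; rfl
    · intro hmem
      have h00 :
          ENextI NextI (ET x (c - (k - 1) - 1) (ET x (c - (k - 1)) s'))
              (ET x (c - (k - 1) - 1) (ET x (c - (k - 1)) t')) ∨
            ET x (c - (k - 1) - 1) (ET x (c - (k - 1)) t') =
              ET x (c - (k - 1) - 1) (ET x (c - (k - 1)) s') := hmem 0
      have hcc : c - (k - 1) - 1 = c - k := by omega
      rw [ET_ET, ET_ET, hcc] at h00
      rcases h00 with h00 | h00
      · exact hkspec.2 (Or.inl h00.1)
      · exact hkspec.2 (Or.inr (congrArg RTEState.st h00).symm)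

end RTAux

theorem inv_preserved_by_internal_step {α : Type u} {𝒳 : Type v}
    (NextI : RTState α 𝒳 → RTState α 𝒳 → Prop)
    (hClk : ∀ s t, NextI s t → ∀ x, t.clk x = s.clk x)
    (s' t' : RTEState α 𝒳) (hInv : RT.Inv NextI s')
    (h : RT.ENextI NextI s' t') :
    RT.Inv NextI t' := by
  obtain ⟨hN, hm⟩ := h
  intro x
  have hc : t'.st.clk x = s'.st.clk x := hClk _ _ hN x
  rw [hc, hm x]
  show (s'.st.clk x : ℕ∞) ≤ (s'.m x : ℕ∞) + RT.nfun NextI x t'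
  rw [← tsub_le_iff_left]
  unfold RT.nfun
  refine le_sInf ?_
  rintro b ⟨n, hn, rfl⟩
  rw [tsub_le_iff_left]
  rw [Set.mem_setOf_eq, hc] at hn
  show ((s'.st.clk x : ℕ∞)) ≤ (s'.m x : ℕ∞) + (n : ℕ∞)
  exact_mod_cast RTAux.key hClk hInv hN hm x n hn
end
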